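/- Let x_1,…,x_n ∈ ℝ^d and let R = (R_1,…,R_g) and R_new = (R_{new,1},…,R_{new,g}) be two configurations over r-element subsets R, R_new ⊆ {1,…,n} respectively, with W_R positive definite. Suppose Σ_{j=1}^g Σ_{i∈R_{new,j}} (x_i − m_R(j))^T W_R^{-1} (x_i − m_R(j)) ≤ Σ_{j=1}^g Σ_{i∈R_j} (x_i − m_R(j))^T W_R^{-1} (x_i − m_R(j)). Then (a) det W_{R_new} ≤ det W_R, with equality if and only if W_{R_new} = W_R; and (b) if the empty clusters of R_new are assigned the mean vectors m_{R_new}(j) := m_R(j), then equality of the determinants implies m_{R_new}(j) = m_R(j) for every j ∈ {1,…,g}. -/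

import Mathlib

open Matrix Finset Real

/-- The sample mean of the points `x i`, `i ∈ S`; a fixed a-priori vector `dflt` if `S = ∅`. -/
noncomputable def clusterMean {n d : ℕ} (x : Fin n → Fin d → ℝ) (dflt : Fin d → ℝ)
    (S : Finset (Fin n)) : Fin d → ℝ :=
  if S.Nonempty then (S.card : ℝ)⁻¹ • ∑ i ∈ S, x i else dflt

/-- The pooled (within-groups) SSP matrix of the configuration `C` for the data `x`:
`W = Σ_j Σ_{i ∈ C j} (x i − m_j)(x i − m_j)ᵀ`, where `m_j` is the sample mean of cluster `j`. -/
noncomputable def pooledSSP {n d g : ℕ} (x : Fin n → Fin d → ℝ) (dflt : Fin g → Fin d → ℝ)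
    (C : Fin g → Finset (Fin n)) : Matrix (Fin d) (Fin d) ℝ :=
  ∑ j, ∑ i ∈ C j, Matrix.vecMulVec (x i - clusterMean x (dflt j) (C j))
    (x i - clusterMean x (dflt j) (C j))

/-- A configuration over an `r`-element subset of `{1,…,n}`: a family of `g` pairwise
disjoint (possibly empty) clusters whose union has exactly `r` elements. -/
def IsConfig {n g : ℕ} (r : ℕ) (C : Fin g → Finset (Fin n)) : Prop :=
  (∀ j k : Fin g, j ≠ k → Disjoint (C j) (C k)) ∧ (Finset.univ.biUnion C).card = r

/-- A family of points of `ℝ^d` is in general position if any `d+1` of them are affinely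
independent. -/
def InGeneralPosition {n d : ℕ} (x : Fin n → Fin d → ℝ) : Prop :=
  ∀ s : Finset (Fin n), s.card = d + 1 → AffineIndependent ℝ (fun i : s => x (i : Fin n))

section TDCAux

lemma dot_mulVec_eq_trace {d : ℕ} (M : Matrix (Fin d) (Fin d) ℝ) (v : Fin d → ℝ) :
    v ⬝ᵥ (M *ᵥ v) = (M * vecMulVec v v).trace := by
  simp only [Matrix.trace, Matrix.diag, Matrix.mul_apply, Matrix.vecMulVec_apply,
    dotProduct, Matrix.mulVec, Finset.mul_sum]
  exact Finset.sum_congr rfl fun i _ => Finset.sum_congr rfl fun k _ => by ring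

lemma posSemidef_vecMulVec {d : ℕ} (v : Fin d → ℝ) : (vecMulVec v v).PosSemidef := by
  refine Matrix.PosSemidef.of_dotProduct_mulVec_nonneg ?_ ?_
  · ext i j; simp [Matrix.vecMulVec_apply, mul_comm]
  · intro y
    have h1 : (vecMulVec v v) *ᵥ y = (v ⬝ᵥ y) • v := by
      ext i
      simp only [Matrix.mulVec, Matrix.vecMulVec_apply, dotProduct, Pi.smul_apply, smul_eq_mul,
        Finset.sum_mul]
      exact Finset.sum_congr rfl fun k _ => by ring
    rw [h1]
    have h2 : star y ⬝ᵥ ((v ⬝ᵥ y) • v) = (v ⬝ᵥ y) * (v ⬝ᵥ y) := by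
      simp [dotProduct, Finset.mul_sum]
      exact Finset.sum_congr rfl fun k _ => by ring
    rw [h2]
    exact mul_self_nonneg _

lemma quad_nonneg {d : ℕ} {M : Matrix (Fin d) (Fin d) ℝ} (hM : M.PosSemidef)
    (v : Fin d → ℝ) : 0 ≤ v ⬝ᵥ (M *ᵥ v) := by
  have := hM.dotProduct_mulVec_nonneg v
  simpa using this

lemma quad_eq_zero {d : ℕ} {M : Matrix (Fin d) (Fin d) ℝ} (hM : M.PosDef)
    {v : Fin d → ℝ} (h : v ⬝ᵥ (M *ᵥ v) = 0) : v = 0 := by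
  by_contra hv
  have := hM.dotProduct_mulVec_pos hv
  rw [show star v = v from rfl] at this
  exact this.ne' h

lemma sum_sub_clusterMean {n d : ℕ} (x : Fin n → Fin d → ℝ) (dflt : Fin d → ℝ)
    {S : Finset (Fin n)} (hS : S.Nonempty) :
    ∑ i ∈ S, (x i - clusterMean x dflt S) = 0 := by
  have hc : (S.card : ℝ) ≠ 0 := Nat.cast_ne_zero.mpr (Finset.card_ne_zero_of_mem hS.choose_spec)
  rw [Finset.sum_sub_distrib, Finset.sum_const, clusterMean, if_pos hS,
    ← Nat.cast_smul_eq_nsmul ℝ, smul_smul, mul_inv_cancel₀ hc, one_smul, sub_self]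

lemma quad_decomp {n d : ℕ} (M : Matrix (Fin d) (Fin d) ℝ) (x : Fin n → Fin d → ℝ)
    (m : Fin d → ℝ) {S : Finset (Fin n)} (hS : S.Nonempty) :
    ∑ i ∈ S, (x i - m) ⬝ᵥ (M *ᵥ (x i - m)) =
      ∑ i ∈ S, (x i - clusterMean x m S) ⬝ᵥ (M *ᵥ (x i - clusterMean x m S))
      + (S.card : ℝ) * ((clusterMean x m S - m) ⬝ᵥ (M *ᵥ (clusterMean x m S - m))) := by
  set μ := clusterMean x m S with hμ
  have key : ∀ i : Fin n, x i - m = (x i - μ) + (μ - m) := fun i => by abel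
  have expand : ∀ i, (x i - m) ⬝ᵥ (M *ᵥ (x i - m)) =
      (x i - μ) ⬝ᵥ (M *ᵥ (x i - μ)) + (μ - m) ⬝ᵥ (M *ᵥ (μ - m))
      + ((x i - μ) ⬝ᵥ (M *ᵥ (μ - m)) + (μ - m) ⬝ᵥ (M *ᵥ (x i - μ))) := by
    intro i
    rw [key i, Matrix.mulVec_add, add_dotProduct, dotProduct_add, dotProduct_add]
    ring
  rw [Finset.sum_congr rfl fun i _ => expand i]
  rw [Finset.sum_add_distrib, Finset.sum_add_distrib, Finset.sum_add_distrib]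
  have h1 : ∑ i ∈ S, (x i - μ) ⬝ᵥ (M *ᵥ (μ - m)) = 0 := by
    have e : ∑ i ∈ S, (x i - μ) ⬝ᵥ (M *ᵥ (μ - m)) = (∑ i ∈ S, (x i - μ)) ⬝ᵥ (M *ᵥ (μ - m)) := by
      simp only [dotProduct, Finset.sum_apply, Finset.sum_mul]
      exact Finset.sum_comm
    rw [e, sum_sub_clusterMean x m hS, zero_dotProduct]
  have hms : M *ᵥ (∑ i ∈ S, (x i - μ)) = ∑ i ∈ S, M *ᵥ (x i - μ) := by
    simp only [← Matrix.mulVecLin_apply]; exact map_sum _ _ _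
  have h2 : ∑ i ∈ S, (μ - m) ⬝ᵥ (M *ᵥ (x i - μ)) = 0 := by
    have e : ∑ i ∈ S, (μ - m) ⬝ᵥ (M *ᵥ (x i - μ)) = (μ - m) ⬝ᵥ (∑ i ∈ S, M *ᵥ (x i - μ)) := by
      simp only [dotProduct, Finset.sum_apply, Finset.mul_sum]
      exact Finset.sum_comm
    rw [e, ← hms, sum_sub_clusterMean x m hS, Matrix.mulVec_zero, dotProduct_zero]
  rw [h1, h2, Finset.sum_const, nsmul_eq_mul]
  ring

lemma trace_eq_sum_eigenvalues' {d : ℕ} {A : Matrix (Fin d) (Fin d) ℝ} (hA : A.IsHermitian) :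
    A.trace = ∑ i, hA.eigenvalues i := by
  conv_lhs => rw [hA.spectral_theorem, Unitary.conjStarAlgAut_apply]
  rw [Matrix.trace_mul_cycle]
  rw [(Matrix.mem_unitaryGroup_iff').mp (hA.eigenvectorUnitary).2]
  simp [Matrix.trace_diagonal]

lemma prod_le_one_of_sum_le {d : ℕ} {f : Fin d → ℝ} (h0 : ∀ i, 0 ≤ f i)
    (hs : ∑ i, f i ≤ d) : ∏ i, f i ≤ 1 := by
  by_cases hz : ∃ i, f i = 0
  · obtain ⟨i, hi⟩ := hz
    rw [Finset.prod_eq_zero (Finset.mem_univ i) hi]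
    norm_num
  · push_neg at hz
    have hpos : ∀ i, 0 < f i := fun i => lt_of_le_of_ne (h0 i) (Ne.symm (hz i))
    have hlog : Real.log (∏ i, f i) = ∑ i, Real.log (f i) :=
      Real.log_prod (fun i _ => (hpos i).ne')
    have hle : ∑ i, Real.log (f i) ≤ ∑ i, (f i - 1) :=
      Finset.sum_le_sum fun i _ => Real.log_le_sub_one_of_pos (hpos i)
    have : Real.log (∏ i, f i) ≤ 0 := by
      rw [hlog]
      refine hle.trans ?_
      rw [Finset.sum_sub_distrib]
      simp only [Finset.sum_const, Finset.card_univ, Fintype.card_fin, nsmul_eq_mul, mul_one]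
      linarith
    have hp : 0 < ∏ i, f i := Finset.prod_pos fun i _ => hpos i
    calc ∏ i, f i = Real.exp (Real.log (∏ i, f i)) := (Real.exp_log hp).symm
    _ ≤ Real.exp 0 := Real.exp_le_exp.mpr this
    _ = 1 := Real.exp_zero

lemma eq_one_of_prod_eq_one {d : ℕ} {f : Fin d → ℝ} (h0 : ∀ i, 0 ≤ f i)
    (hs : ∑ i, f i ≤ d) (hp : ∏ i, f i = 1) : ∀ i, f i = 1 := by
  have hnz : ∀ i, f i ≠ 0 := by
    intro i hi
    rw [Finset.prod_eq_zero (Finset.mem_univ i) hi] at hp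
    norm_num at hp
  have hpos : ∀ i, 0 < f i := fun i => lt_of_le_of_ne (h0 i) (Ne.symm (hnz i))
  have hlog : ∑ i, Real.log (f i) = 0 := by
    rw [← Real.log_prod (fun i _ => hnz i), hp, Real.log_one]
  have hterm : ∀ i ∈ Finset.univ, (0:ℝ) ≤ f i - 1 - Real.log (f i) := fun i _ => by
    have := Real.log_le_sub_one_of_pos (hpos i); linarith
  have hsum0 : ∑ i, (f i - 1 - Real.log (f i)) = 0 := by
    apply le_antisymm
    · have : ∑ i, (f i - 1 - Real.log (f i)) = (∑ i, f i) - d - 0 := by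
        rw [← hlog, Finset.sum_sub_distrib, Finset.sum_sub_distrib]
        simp [Finset.card_univ]
      rw [this]; linarith
    · exact Finset.sum_nonneg hterm
  intro i
  have := (Finset.sum_eq_zero_iff_of_nonneg hterm).mp hsum0 i (Finset.mem_univ i)
  by_contra hne
  have := Real.log_lt_sub_one_of_pos (hpos i) hne
  linarith

open scoped MatrixOrder in
lemma gen_det_lemma {d : ℕ} {W V : Matrix (Fin d) (Fin d) ℝ} (hW : W.PosDef)
    (hV : V.PosSemidef) (ht : (W⁻¹ * V).trace ≤ d) :
    V.det ≤ W.det ∧ (V.det = W.det → V = W) := by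
  set S := CFC.sqrt W with hSdef
  have hS : S.PosSemidef := Matrix.nonneg_iff_posSemidef.mp (CFC.sqrt_nonneg W)
  have hSS : S * S = W := CFC.sqrt_mul_sqrt_self W (Matrix.nonneg_iff_posSemidef.mpr hW.posSemidef)
  have hdW : 0 < W.det := hW.det_pos
  have hds2 : S.det * S.det = W.det := by rw [← Matrix.det_mul, hSS]
  have hdS : S.det ≠ 0 := by
    intro h; rw [h, mul_zero] at hds2; exact hdW.ne' hds2.symm
  have hSu : IsUnit S.det := isUnit_iff_ne_zero.mpr hdS
  have hSherm : S.IsHermitian := hS.1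
  have hSinv_herm : (S⁻¹).IsHermitian := by
    rw [Matrix.IsHermitian, Matrix.conjTranspose_nonsing_inv, hSherm.eq]
  set N := S⁻¹ * V * S⁻¹ with hNdef
  have hN : N.PosSemidef := by
    have := hV.mul_mul_conjTranspose_same S⁻¹
    rwa [hSinv_herm.eq] at this
  have hWinv : W⁻¹ = S⁻¹ * S⁻¹ := by rw [← hSS, Matrix.mul_inv_rev]
  have htrN : N.trace = (W⁻¹ * V).trace := by
    rw [hNdef, Matrix.trace_mul_cycle, hWinv, Matrix.mul_assoc]
  have hdetN : N.det * W.det = V.det := by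
    rw [hNdef, Matrix.det_mul, Matrix.det_mul, Matrix.det_nonsing_inv, Ring.inverse_eq_inv',
      ← hds2]
    field_simp
  set f := hN.1.eigenvalues with hfdef
  have hf0 : ∀ i, 0 ≤ f i := hN.eigenvalues_nonneg
  have hfsum : ∑ i, f i ≤ d := by
    rw [← trace_eq_sum_eigenvalues' hN.1, htrN]; exact ht
  have hfprod : ∏ i, f i = N.det := by
    have := hN.1.det_eq_prod_eigenvalues
    simpa using this.symm
  have hNle : N.det ≤ 1 := hfprod ▸ prod_le_one_of_sum_le hf0 hfsum
  constructor
  · nlinarith [hdetN, hdW]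
  · intro hdet
    have hN1 : N.det = 1 := by
      have : N.det * W.det = W.det := by rw [hdetN, hdet]
      field_simp at this
      tauto
    have heig : ∀ i, f i = 1 := eq_one_of_prod_eq_one hf0 hfsum (hfprod.trans hN1)
    have hNone : N = 1 := by
      have hsp := hN.1.spectral_theorem
      have : RCLike.ofReal ∘ hN.1.eigenvalues = fun _ : Fin d => (1:ℝ) := by
        funext i; simpa using heig i
      rw [this] at hsp
      rw [hsp]
      simp only [Unitary.conjStarAlgAut_apply, Matrix.diagonal_one, Matrix.mul_one]
      exact (Matrix.mem_unitaryGroup_iff).mp (hN.1.eigenvectorUnitary).2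
    have : V = S * N * S := by
      rw [hNdef, ← Matrix.mul_assoc, ← Matrix.mul_assoc,
        Matrix.mul_nonsing_inv S hSu, Matrix.one_mul, Matrix.mul_assoc,
        Matrix.nonsing_inv_mul S hSu, Matrix.mul_one]
    rw [this, hNone, Matrix.mul_one, hSS]

lemma trace_mul_pooledSSP {n d g : ℕ} (M : Matrix (Fin d) (Fin d) ℝ)
    (x : Fin n → Fin d → ℝ) (dflt : Fin g → Fin d → ℝ) (D : Fin g → Finset (Fin n)) :
    (M * pooledSSP x dflt D).trace =
      ∑ j, ∑ i ∈ D j, (x i - clusterMean x (dflt j) (D j)) ⬝ᵥ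
        (M *ᵥ (x i - clusterMean x (dflt j) (D j))) := by
  rw [pooledSSP, Matrix.mul_sum, Matrix.trace_sum]
  refine Finset.sum_congr rfl fun j _ => ?_
  rw [Matrix.mul_sum, Matrix.trace_sum]
  exact Finset.sum_congr rfl fun i _ => (dot_mulVec_eq_trace M _).symm

lemma pooledSSP_posSemidef {n d g : ℕ} (x : Fin n → Fin d → ℝ)
    (dflt : Fin g → Fin d → ℝ) (D : Fin g → Finset (Fin n)) :
    (pooledSSP x dflt D).PosSemidef := by
  rw [pooledSSP]
  refine Finset.sum_induction _ _ (fun a b ha hb => ha.add hb) Matrix.PosSemidef.zero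
    fun j _ => ?_
  exact Finset.sum_induction _ _ (fun a b ha hb => ha.add hb) Matrix.PosSemidef.zero
    fun i _ => posSemidef_vecMulVec _

end TDCAux

/-- Theorem 3.1 of the paper.  If the configuration `Cnew` has a smaller
total squared Mahalanobis distance (w.r.t. `W_R` and the means of `R`) than `R` itself,
then `det W_{R_new} ≤ det W_R`, with equality iff `W_{R_new} = W_R`; and (assigning the
old means to the empty new clusters) equality of the determinants forces equality of all
the mean vectors. -/
theorem tdc_reduction_step {n d g r : ℕ}
    (x : Fin n → Fin d → ℝ) (dflt : Fin g → Fin d → ℝ)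
    (C Cnew : Fin g → Finset (Fin n)) (hC : IsConfig r C) (hCnew : IsConfig r Cnew)
    (hW : (pooledSSP x dflt C).PosDef)
    (m : Fin g → Fin d → ℝ) (hm : ∀ j, m j = clusterMean x (dflt j) (C j))
    (h9 : ∑ j, ∑ i ∈ Cnew j, (x i - m j) ⬝ᵥ ((pooledSSP x dflt C)⁻¹ *ᵥ (x i - m j)) ≤
          ∑ j, ∑ i ∈ C j, (x i - m j) ⬝ᵥ ((pooledSSP x dflt C)⁻¹ *ᵥ (x i - m j))) :
    (pooledSSP x m Cnew).det ≤ (pooledSSP x dflt C).det ∧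
    ((pooledSSP x m Cnew).det = (pooledSSP x dflt C).det ↔
      pooledSSP x m Cnew = pooledSSP x dflt C) ∧
    ((pooledSSP x m Cnew).det = (pooledSSP x dflt C).det →
      ∀ j, clusterMean x (m j) (Cnew j) = m j) := by
  set W := pooledSSP x dflt C with hWdef
  set B := pooledSSP x m Cnew with hBdef
  have hWu : IsUnit W.det := isUnit_iff_ne_zero.mpr hW.det_pos.ne'
  have hWinv : (W⁻¹).PosDef := hW.inv
  -- the RHS of h9 equals d
  have hRHS : ∑ j, ∑ i ∈ C j, (x i - m j) ⬝ᵥ (W⁻¹ *ᵥ (x i - m j)) = (d : ℝ) := by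
    have e1 : ∑ j, ∑ i ∈ C j, (x i - m j) ⬝ᵥ (W⁻¹ *ᵥ (x i - m j)) = (W⁻¹ * W).trace := by
      rw [hWdef, trace_mul_pooledSSP]
      exact Finset.sum_congr rfl fun j _ => by rw [hm j]
    rw [e1, Matrix.nonsing_inv_mul W hWu, Matrix.trace_one]
    simp
  -- decomposition of the LHS of h9
  set μ : Fin g → Fin d → ℝ := fun j => clusterMean x (m j) (Cnew j) with hμdef
  have hdecomp : ∀ j, ∑ i ∈ Cnew j, (x i - m j) ⬝ᵥ (W⁻¹ *ᵥ (x i - m j)) =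
      (∑ i ∈ Cnew j, (x i - μ j) ⬝ᵥ (W⁻¹ *ᵥ (x i - μ j)))
      + ((Cnew j).card : ℝ) * ((μ j - m j) ⬝ᵥ (W⁻¹ *ᵥ (μ j - m j))) := by
    intro j
    by_cases h : (Cnew j).Nonempty
    · exact quad_decomp W⁻¹ x (m j) h
    · rw [Finset.not_nonempty_iff_eq_empty] at h
      simp [h]
  have htrB : (W⁻¹ * B).trace = ∑ j, ∑ i ∈ Cnew j, (x i - μ j) ⬝ᵥ (W⁻¹ *ᵥ (x i - μ j)) := by
    rw [hBdef, trace_mul_pooledSSP]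
  have hLHS : ∑ j, ∑ i ∈ Cnew j, (x i - m j) ⬝ᵥ (W⁻¹ *ᵥ (x i - m j)) =
      (W⁻¹ * B).trace + ∑ j, ((Cnew j).card : ℝ) * ((μ j - m j) ⬝ᵥ (W⁻¹ *ᵥ (μ j - m j))) := by
    rw [htrB, ← Finset.sum_add_distrib]
    exact Finset.sum_congr rfl fun j _ => hdecomp j
  have hcorr_nonneg : ∀ j ∈ Finset.univ,
      (0:ℝ) ≤ ((Cnew j).card : ℝ) * ((μ j - m j) ⬝ᵥ (W⁻¹ *ᵥ (μ j - m j))) := fun j _ =>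
    mul_nonneg (Nat.cast_nonneg _) (quad_nonneg hWinv.posSemidef _)
  have htrace_le : (W⁻¹ * B).trace ≤ (d : ℝ) := by
    have h1 : (W⁻¹ * B).trace ≤ (W⁻¹ * B).trace
        + ∑ j, ((Cnew j).card : ℝ) * ((μ j - m j) ⬝ᵥ (W⁻¹ *ᵥ (μ j - m j))) :=
      le_add_of_nonneg_right (Finset.sum_nonneg hcorr_nonneg)
    calc (W⁻¹ * B).trace ≤ _ := h1
    _ = ∑ j, ∑ i ∈ Cnew j, (x i - m j) ⬝ᵥ (W⁻¹ *ᵥ (x i - m j)) := hLHS.symm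
    _ ≤ ∑ j, ∑ i ∈ C j, (x i - m j) ⬝ᵥ (W⁻¹ *ᵥ (x i - m j)) := h9
    _ = (d : ℝ) := hRHS
  have hB : B.PosSemidef := pooledSSP_posSemidef x m Cnew
  obtain ⟨hle, heq⟩ := gen_det_lemma hW hB htrace_le
  refine ⟨hle, ⟨fun h => heq h, fun h => by rw [h]⟩, ?_⟩
  -- part (b): equality of determinants forces equality of means
  intro hdet j
  have hBW : B = W := heq hdet
  have htrB1 : (W⁻¹ * B).trace = (d : ℝ) := by
    rw [hBW, Matrix.nonsing_inv_mul W hWu, Matrix.trace_one]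
    simp
  have hsum_le : ∑ j, ((Cnew j).card : ℝ) * ((μ j - m j) ⬝ᵥ (W⁻¹ *ᵥ (μ j - m j))) ≤ 0 := by
    have := hLHS ▸ (h9.trans_eq hRHS)
    rw [htrB1] at this
    linarith
  have hsum0 : ∑ j, ((Cnew j).card : ℝ) * ((μ j - m j) ⬝ᵥ (W⁻¹ *ᵥ (μ j - m j))) = 0 :=
    le_antisymm hsum_le (Finset.sum_nonneg hcorr_nonneg)
  have hterm0 := (Finset.sum_eq_zero_iff_of_nonneg hcorr_nonneg).mp hsum0 j (Finset.mem_univ j)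
  by_cases h : (Cnew j).Nonempty
  · have hcard : ((Cnew j).card : ℝ) ≠ 0 :=
      Nat.cast_ne_zero.mpr (Finset.card_ne_zero_of_mem h.choose_spec)
    have hq0 : (μ j - m j) ⬝ᵥ (W⁻¹ *ᵥ (μ j - m j)) = 0 := by
      rcases mul_eq_zero.mp hterm0 with h' | h'
      · exact absurd h' hcard
      · exact h'
    have := quad_eq_zero hWinv hq0
    have : μ j = m j := by
      have := sub_eq_zero.mp this
      exact this
    exact this
  · rw [Finset.not_nonempty_iff_eq_empty] at h
    show clusterMean x (m j) (Cnew j) = m j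
    rw [h, clusterMean, if_neg (by simp)]
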